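/- arXiv:math/0510155 — 2 statements merged into one kernel-verified Lean document; each statement's English description precedes it below -/
import Mathlib

section
/- For every n ≥ 1, P(n) = Σ_{k=0}^∞ kⁿ / 2^{k+1}. -/
open scoped BigOperators

/-- A zero-one matrix (entries in `Bool`) with no zero rows and no zero columns. -/
def IsIncidence {k l : ℕ} (M : Matrix (Fin k) (Fin l) Bool) : Prop :=
  (∀ i, ∃ j, M i j = true) ∧ (∀ j, ∃ i, M i j = true)

/-- The number of entries equal to one in a zero-one matrix. -/
def numOnes {k l : ℕ} (M : Matrix (Fin k) (Fin l) Bool) : ℕ :=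
  (Finset.univ.filter fun p : Fin k × Fin l => M p.1 p.2 = true).card

/-- `F₁₁₁₁ n`: the number of incidence matrices (of any size) with exactly `n` ones. -/
noncomputable def F1111 (n : ℕ) : ℕ :=
  Nat.card {A : Σ k l : ℕ, Matrix (Fin k) (Fin l) Bool //
    IsIncidence A.2.2 ∧ numOnes A.2.2 = n}

noncomputable def mIJ (i j n : ℕ) : ℕ :=
  Nat.card {M : Matrix (Fin i) (Fin j) Bool // IsIncidence M ∧ numOnes M = n}

/-- total preorders on `Fin n` -/
noncomputable def numPreorders (n : ℕ) : ℕ :=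
  Nat.card {R : Fin n → Fin n → Prop //
    (∀ x, R x x) ∧ (∀ x y z, R x y → R y z → R x z) ∧ (∀ x y, R x y ∨ x = y ∨ R y x)}

noncomputable def numPreordersWithBlocks (n k : ℕ) : ℕ :=
  Nat.card {R : Fin n → Fin n → Prop //
    ((∀ x, R x x) ∧ (∀ x y z, R x y → R y z → R x z) ∧ (∀ x y, R x y ∨ x = y ∨ R y x)) ∧
    Nat.card (Quot fun x y => R x y ∧ R y x) = k}

noncomputable def S11 (n : ℕ) : ℕ :=
  Nat.card {A : Σ k : ℕ, Matrix (Fin k) (Fin k) Bool //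
    (∀ i j, A.2 i j = A.2 j i) ∧ IsIncidence A.2 ∧ numOnes A.2 = n}

def trSigma : (Σ k l : ℕ, Matrix (Fin k) (Fin l) Bool) → (Σ k l : ℕ, Matrix (Fin k) (Fin l) Bool) :=
  fun A => ⟨A.2.1, A.1, A.2.2.transpose⟩

noncomputable def Phi11 (n : ℕ) : ℕ :=
  Nat.card (Quot fun x y : {A : Σ k l : ℕ, Matrix (Fin k) (Fin l) Bool //
    IsIncidence A.2.2 ∧ numOnes A.2.2 = n} => trSigma x.1 = y.1)

noncomputable def F1011 (n : ℕ) : ℕ :=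
  Nat.card {A : Σ k l : ℕ, Matrix (Fin k) (Fin l) Bool //
    IsIncidence A.2.2 ∧ numOnes A.2.2 = n ∧
    ∀ i i' : Fin A.1, (∀ j, A.2.2 i j = A.2.2 i' j) → i = i'}

noncomputable def F0001 (n : ℕ) : ℕ :=
  Nat.card (Quot fun x y : {A : Σ k l : ℕ, Matrix (Fin k) (Fin l) Bool //
      IsIncidence A.2.2 ∧ numOnes A.2.2 = n ∧
      ∀ i i' : Fin A.1, (∀ j, A.2.2 i j = A.2.2 i' j) → i = i'} =>
    ∃ σ : Equiv.Perm (Fin x.1.1), ∃ τ : Equiv.Perm (Fin x.1.2.1),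
      y.1 = ⟨x.1.1, x.1.2.1, Matrix.of fun i j => x.1.2.2 (σ i) (τ j)⟩)

noncomputable def numInvolutions (n : ℕ) : ℕ :=
  Nat.card {σ : Equiv.Perm (Fin n) // σ * σ = 1}

/-- number of cycles of a permutation, counting fixed points as cycles -/
def numCycles {n : ℕ} (σ : Equiv.Perm (Fin n)) : ℕ :=
  Multiset.card σ.cycleType + (n - σ.support.card)

/-- unsigned Stirling number of the first kind: permutations of `n` with `k` cycles -/
noncomputable def stirling1Unsigned (n k : ℕ) : ℕ :=
  Nat.card {σ : Equiv.Perm (Fin n) // numCycles σ = k}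

/-- Stirling number of the second kind: partitions of an `n`-set into `k` blocks -/
noncomputable def stirling2 (n k : ℕ) : ℕ :=
  Nat.card {c : Setoid (Fin n) // Nat.card (Quotient c) = k}

noncomputable def sSym (k n : ℕ) : ℕ :=
  Nat.card {M : Matrix (Fin k) (Fin k) Bool // (∀ a b, M a b = M b a) ∧ numOnes M = n}

noncomputable def muSym (i n : ℕ) : ℕ :=
  Nat.card {M : Matrix (Fin i) (Fin i) Bool //
    (∀ a b, M a b = M b a) ∧ IsIncidence M ∧ numOnes M = n}

set_option linter.unusedSectionVars false
set_option maxHeartbeats 1000000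

open scoped Classical

section TP
variable {α β : Type*}

/-- total preorder predicate -/
def TPre (R : α → α → Prop) : Prop :=
  (∀ x, R x x) ∧ (∀ x y z, R x y → R y z → R x z) ∧ (∀ x y, R x y ∨ x = y ∨ R y x)

theorem TPre.total {R : α → α → Prop} (h : TPre R) (x y : α) : R x y ∨ R y x := by
  rcases h.2.2 x y with h1 | rfl | h1
  · exact Or.inl h1
  · exact Or.inl (h.1 x)
  · exact Or.inr h1

/-- transport total preorders along an equiv -/
def tpEquiv (e : α ≃ β) : {R : α → α → Prop // TPre R} ≃ {R : β → β → Prop // TPre R} where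
  toFun := fun ⟨R, h⟩ => ⟨fun a b => R (e.symm a) (e.symm b),
    ⟨fun x => h.1 _, fun _ _ _ h1 h2 => h.2.1 _ _ _ h1 h2, fun x y => by
      rcases h.2.2 (e.symm x) (e.symm y) with h1 | h1 | h1
      · exact Or.inl h1
      · exact Or.inr (Or.inl (e.symm.injective h1))
      · exact Or.inr (Or.inr h1)⟩⟩
  invFun := fun ⟨R, h⟩ => ⟨fun a b => R (e a) (e b),
    ⟨fun x => h.1 _, fun _ _ _ h1 h2 => h.2.1 _ _ _ h1 h2, fun x y => by
      rcases h.2.2 (e x) (e y) with h1 | h1 | h1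
      · exact Or.inl h1
      · exact Or.inr (Or.inl (e.injective h1))
      · exact Or.inr (Or.inr h1)⟩⟩
  left_inv := fun ⟨R, h⟩ => Subtype.ext (by funext a b; simp)
  right_inv := fun ⟨R, h⟩ => Subtype.ext (by funext a b; simp)

theorem exists_top [Fintype α] [Nonempty α] {R : α → α → Prop} (h : TPre R) :
    ∃ x, ∀ y, R y x := by
  have key : ∀ (s : Finset α) (_ : s.Nonempty), ∃ x ∈ s, ∀ y ∈ s, R y x := by
    intro s hs
    induction hs using Finset.Nonempty.cons_induction with
    | singleton a => exact ⟨a, Finset.mem_singleton_self a, fun y hy => by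
        rw [Finset.mem_singleton] at hy; subst hy; exact h.1 _⟩
    | cons a s ha hs ih =>
      obtain ⟨x, hx, hmax⟩ := ih
      rcases h.total a x with h1 | h1
      · exact ⟨x, Finset.mem_cons_of_mem hx, fun y hy => by
          rcases Finset.mem_cons.mp hy with rfl | hy
          · exact h1
          · exact hmax y hy⟩
      · exact ⟨a, Finset.mem_cons_self a s, fun y hy => by
          rcases Finset.mem_cons.mp hy with rfl | hy
          · exact h.1 _
          · exact h.2.1 _ _ _ (hmax y hy) h1⟩
  obtain ⟨x, _, hx⟩ := key Finset.univ Finset.univ_nonempty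
  exact ⟨x, fun y => hx y (Finset.mem_univ y)⟩

variable [Fintype α] [DecidableEq α]

/-- the top block of a total preorder -/
noncomputable def maxSet (R : α → α → Prop) : Finset α :=
  Finset.univ.filter fun x => ∀ y, R y x

theorem mem_maxSet {R : α → α → Prop} {x : α} : x ∈ maxSet R ↔ ∀ y, R y x := by
  simp [maxSet]

/-- glue a total preorder on the complement of `s` with `s` on top -/
def relOf (s : Finset α) (R' : {x // x ∈ sᶜ} → {x // x ∈ sᶜ} → Prop) : α → α → Prop :=
  fun x y => y ∈ s ∨ ∃ (hx : x ∈ sᶜ) (hy : y ∈ sᶜ), R' ⟨x, hx⟩ ⟨y, hy⟩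

theorem relOf_tp {s : Finset α} {R' : {x // x ∈ sᶜ} → {x // x ∈ sᶜ} → Prop}
    (h' : TPre R') : TPre (relOf s R') := by
  refine ⟨fun x => ?_, fun x y z h1 h2 => ?_, fun x y => ?_⟩
  · by_cases hx : x ∈ s
    · exact Or.inl hx
    · exact Or.inr ⟨Finset.mem_compl.mpr hx, Finset.mem_compl.mpr hx, h'.1 _⟩
  · rcases h2 with h2 | ⟨hy, hz, h2⟩
    · exact Or.inl h2
    · rcases h1 with h1 | ⟨hx, hy', h1⟩
      · exact absurd h1 (Finset.mem_compl.mp hy)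
      · exact Or.inr ⟨hx, hz, h'.2.1 _ _ _ h1 h2⟩
  · by_cases hy : y ∈ s
    · exact Or.inl (Or.inl hy)
    · by_cases hx : x ∈ s
      · exact Or.inr (Or.inr (Or.inl hx))
      · rcases h'.2.2 ⟨x, Finset.mem_compl.mpr hx⟩ ⟨y, Finset.mem_compl.mpr hy⟩ with
          h1 | h1 | h1
        · exact Or.inl (Or.inr ⟨_, _, h1⟩)
        · exact Or.inr (Or.inl (congrArg Subtype.val h1))
        · exact Or.inr (Or.inr (Or.inr ⟨_, _, h1⟩))

theorem maxSet_relOf {s : Finset α} (hs : s.Nonempty)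
    {R' : {x // x ∈ sᶜ} → {x // x ∈ sᶜ} → Prop} : maxSet (relOf s R') = s := by
  ext x
  rw [mem_maxSet]
  constructor
  · intro hx
    by_contra hxs
    obtain ⟨y, hy⟩ := hs
    rcases hx y with h1 | ⟨hy', _, _⟩
    · exact hxs h1
    · exact Finset.mem_compl.mp hy' hy
  · intro hx y
    exact Or.inl hx

theorem relOf_restrict {s : Finset α} {R' : {x // x ∈ sᶜ} → {x // x ∈ sᶜ} → Prop}
    (a b : {x // x ∈ sᶜ}) : relOf s R' a b ↔ R' a b := by
  constructor
  · rintro (h | ⟨hx, hy, h⟩)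
    · exact absurd h (Finset.mem_compl.mp b.2)
    · convert h <;> exact (Subtype.coe_eta _ _).symm
  · intro h
    exact Or.inr ⟨a.2, b.2, by simpa using h⟩

theorem relOf_decomp [Nonempty α] {R : α → α → Prop} (h : TPre R) (x y : α) :
    R x y ↔ relOf (maxSet R) (fun a b => R a b) x y := by
  constructor
  · intro hxy
    by_cases hy : y ∈ maxSet R
    · exact Or.inl hy
    · by_cases hx : x ∈ maxSet R
      · exact absurd (mem_maxSet.mpr fun z => h.2.1 _ _ _ (mem_maxSet.mp hx z) hxy) hy
      · exact Or.inr ⟨Finset.mem_compl.mpr hx, Finset.mem_compl.mpr hy, hxy⟩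
  · rintro (hy | ⟨_, _, hxy⟩)
    · exact mem_maxSet.mp hy x
    · exact hxy

end TP

section Bij
variable {α : Type*} [Fintype α] [DecidableEq α] [Nonempty α]

/-- fibers of the decomposition -/
abbrev Fib (α : Type*) [Fintype α] [DecidableEq α] (s : Finset α) : Type _ :=
  PLift s.Nonempty × {R' : {x // x ∈ sᶜ} → {x // x ∈ sᶜ} → Prop // TPre R'}

noncomputable def psi : (Σ s : Finset α, Fib α s) → {R : α → α → Prop // TPre R} :=
  fun ⟨s, _, R'⟩ => ⟨relOf s R'.1, relOf_tp R'.2⟩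

theorem psi_bijective : Function.Bijective (psi (α := α)) := by
  constructor
  · rintro ⟨s₁, h₁, R₁⟩ ⟨s₂, h₂, R₂⟩ heq
    have hrel : relOf s₁ R₁.1 = relOf s₂ R₂.1 := congrArg Subtype.val heq
    have hsets : s₁ = s₂ := by
      rw [← maxSet_relOf h₁.down (R' := R₁.1), ← maxSet_relOf h₂.down (R' := R₂.1), hrel]
    subst hsets
    have hR : R₁ = R₂ := by
      apply Subtype.ext
      funext a b
      apply propext
      rw [← relOf_restrict (R' := R₁.1) a b, ← relOf_restrict (R' := R₂.1) a b, hrel]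
    subst hR
    exact congrArg _ (Prod.ext (Subsingleton.elim _ _) rfl)
  · rintro ⟨R, h⟩
    have hne : (maxSet R).Nonempty := by
      obtain ⟨x, hx⟩ := exists_top h
      exact ⟨x, mem_maxSet.mpr hx⟩
    have htp : TPre (fun a b : {x // x ∈ (maxSet R)ᶜ} => R a b) := by
      refine ⟨fun x => h.1 _, fun x y z h1 h2 => h.2.1 _ _ _ h1 h2, fun x y => ?_⟩
      rcases h.2.2 x.1 y.1 with h1 | h1 | h1
      · exact Or.inl h1
      · exact Or.inr (Or.inl (Subtype.ext h1))
      · exact Or.inr (Or.inr h1)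
    refine ⟨⟨maxSet R, ⟨hne⟩, ⟨fun a b => R a b, htp⟩⟩, ?_⟩
    apply Subtype.ext
    funext x y
    exact propext (relOf_decomp h x y).symm

theorem card_tp_eq_sum :
    Nat.card {R : α → α → Prop // TPre R} =
      ∑ s : Finset α, (if s.Nonempty then
        Nat.card {R' : {x // x ∈ sᶜ} → {x // x ∈ sᶜ} → Prop // TPre R'} else 0) := by
  haveI : ∀ s : Finset α, Fintype (Fib α s) := fun s => Fintype.ofFinite _
  haveI : Fintype {R : α → α → Prop // TPre R} := Fintype.ofFinite _
  rw [← Nat.card_congr (Equiv.ofBijective _ psi_bijective)]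
  rw [Nat.card_eq_fintype_card, Fintype.card_sigma]
  apply Finset.sum_congr rfl
  intro s _
  rw [← Nat.card_eq_fintype_card, Nat.card_prod]
  by_cases hs : s.Nonempty
  · haveI : Nonempty (PLift s.Nonempty) := ⟨⟨hs⟩⟩
    rw [if_pos hs, Nat.card_unique, one_mul]
  · haveI : IsEmpty (PLift s.Nonempty) := ⟨fun h => hs h.down⟩
    rw [if_neg hs, Nat.card_of_isEmpty, zero_mul]

end Bij

theorem numPreorders_eq (n : ℕ) :
    numPreorders n = Nat.card {R : Fin n → Fin n → Prop // TPre R} := rfl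

theorem numPreorders_zero : numPreorders 0 = 1 := by
  rw [numPreorders_eq, Nat.card_eq_one_iff_unique]
  constructor
  · constructor
    rintro ⟨R, hR⟩ ⟨S, hS⟩
    apply Subtype.ext; funext x; exact x.elim0
  · exact ⟨⟨fun x => x.elim0, ⟨fun x => x.elim0, fun x => x.elim0, fun x => x.elim0⟩⟩⟩

theorem card_sub_tp (n : ℕ) (s : Finset (Fin n)) :
    Nat.card {R' : {x // x ∈ sᶜ} → {x // x ∈ sᶜ} → Prop // TPre R'} =
      numPreorders (n - s.card) := by
  rw [numPreorders_eq]
  exact Nat.card_congr (tpEquiv (Fintype.equivFinOfCardEq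
    (by simp [Fintype.card_coe, Finset.card_compl])))

theorem numPreorders_rec (n : ℕ) (hn : 1 ≤ n) :
    numPreorders n = ∑ i ∈ Finset.range n, n.choose i * numPreorders i := by
  haveI : Nonempty (Fin n) := ⟨⟨0, hn⟩⟩
  rw [numPreorders_eq, card_tp_eq_sum]
  have hstep : ∀ s : Finset (Fin n),
      (if s.Nonempty then
        Nat.card {R' : {x // x ∈ sᶜ} → {x // x ∈ sᶜ} → Prop // TPre R'} else 0) =
      (if sᶜ ≠ Finset.univ then numPreorders sᶜ.card else 0) := by
    intro s
    rw [card_sub_tp]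
    by_cases hs : s.Nonempty
    · rw [if_pos hs, if_pos, Finset.card_compl]
      · simp
      · intro h
        obtain ⟨x, hx⟩ := hs
        exact (Finset.mem_compl (s := s)).mp (h ▸ Finset.mem_univ x) hx
    · rw [Finset.not_nonempty_iff_eq_empty] at hs
      subst hs
      rw [if_neg (by simp), if_neg (by simp)]
  rw [Fintype.sum_equiv
    (⟨fun s => sᶜ, fun s => sᶜ, fun s => compl_compl s, fun s => compl_compl s⟩ :
      Finset (Fin n) ≃ Finset (Fin n)) _
    (fun t => if t ≠ Finset.univ then numPreorders t.card else 0) hstep]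
  rw [show (Finset.univ : Finset (Finset (Fin n))) = Finset.univ.powerset from
    Finset.powerset_univ.symm, Finset.sum_powerset]
  have huniv : (Finset.univ : Finset (Fin n)).card = n := by simp
  rw [huniv, Finset.sum_range_succ]
  have hlast : ∑ t ∈ Finset.powersetCard n (Finset.univ : Finset (Fin n)),
      (if t ≠ Finset.univ then numPreorders t.card else 0) = 0 := by
    apply Finset.sum_eq_zero
    intro t ht
    rw [Finset.mem_powersetCard] at ht
    rw [if_neg]
    simp only [ne_eq, not_not]
    apply Finset.eq_univ_of_card
    rw [ht.2]; simp
  rw [hlast, add_zero]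
  apply Finset.sum_congr rfl
  intro i hi
  rw [Finset.mem_range] at hi
  have hconst : ∀ t ∈ Finset.powersetCard i (Finset.univ : Finset (Fin n)),
      (if t ≠ Finset.univ then numPreorders t.card else 0) = numPreorders i := by
    intro t ht
    rw [Finset.mem_powersetCard] at ht
    rw [if_pos, ht.2]
    intro h
    rw [h, huniv] at ht
    omega
  rw [Finset.sum_congr rfl hconst, Finset.sum_const, Finset.card_powersetCard,
    huniv, smul_eq_mul]

noncomputable def fA (m : ℕ) : ℝ := ∑' k : ℕ, (k : ℝ) ^ m / 2 ^ (k + 1)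

theorem summable_fA (m : ℕ) : Summable (fun k : ℕ => (k : ℝ) ^ m / 2 ^ (k + 1)) := by
  have h := (summable_pow_mul_geometric_of_norm_lt_one (R := ℝ) m
    (r := (2 : ℝ)⁻¹) (by rw [Real.norm_eq_abs, abs_of_pos] <;> norm_num)).mul_right (2 : ℝ)⁻¹
  apply h.congr
  intro k
  rw [pow_succ, div_eq_mul_inv, mul_inv, inv_pow]
  ring

theorem fA_zero : fA 0 = 1 := by
  unfold fA
  have : ∀ k : ℕ, (k : ℝ) ^ 0 / 2 ^ (k + 1) = 2⁻¹ * (2⁻¹ : ℝ) ^ k := by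
    intro k
    rw [pow_zero, pow_succ, inv_pow]
    field_simp
  rw [tsum_congr this, tsum_mul_left, tsum_geometric_of_lt_one (by norm_num) (by norm_num)]
  norm_num

theorem tsum_succ_pow (m : ℕ) (hm : 1 ≤ m) :
    ∑' k : ℕ, ((k : ℝ) + 1) ^ m / 2 ^ (k + 1) = 2 * fA m := by
  have hs := summable_fA m
  have h0 : fA m = ∑' k : ℕ, ((k : ℕ) + 1 : ℝ) ^ m / 2 ^ (k + 1 + 1) := by
    unfold fA
    rw [Summable.tsum_eq_zero_add hs]
    simp only [Nat.cast_zero, zero_pow (by omega : m ≠ 0), zero_div, zero_add]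
    apply tsum_congr
    intro k
    push_cast
    ring_nf
  rw [h0, ← tsum_mul_left]
  apply tsum_congr
  intro k
  rw [pow_succ (2:ℝ) (k+1)]
  push_cast
  field_simp

theorem fA_rec (n : ℕ) (hn : 1 ≤ n) :
    fA n = ∑ i ∈ Finset.range n, (n.choose i : ℝ) * fA i := by
  have key : ∑ i ∈ Finset.range (n + 1), (n.choose i : ℝ) * fA i = 2 * fA n := by
    have h1 : ∀ i ∈ Finset.range (n + 1), (n.choose i : ℝ) * fA i =
        ∑' k : ℕ, (n.choose i : ℝ) * ((k : ℝ) ^ i / 2 ^ (k + 1)) := by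
      intro i _
      rw [fA, Summable.tsum_mul_left _ (summable_fA i)]
    rw [Finset.sum_congr rfl h1,
      ← Summable.tsum_finsetSum (fun i _ => (summable_fA i).mul_left _)]
    have h2 : ∀ k : ℕ, (∑ i ∈ Finset.range (n + 1),
        (n.choose i : ℝ) * ((k : ℝ) ^ i / 2 ^ (k + 1))) =
        ((k : ℝ) + 1) ^ n / 2 ^ (k + 1) := by
      intro k
      rw [show (∑ i ∈ Finset.range (n + 1),
          (n.choose i : ℝ) * ((k : ℝ) ^ i / 2 ^ (k + 1))) =
          ∑ i ∈ Finset.range (n + 1),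
          ((n.choose i : ℝ) * (k : ℝ) ^ i) / 2 ^ (k + 1) from
        Finset.sum_congr rfl (fun i _ => by ring), ← Finset.sum_div]
      congr 1
      rw [add_pow (k : ℝ) 1 n]
      apply Finset.sum_congr rfl
      intro i _
      rw [one_pow]
      ring
    rw [tsum_congr h2, tsum_succ_pow n hn]
  rw [Finset.sum_range_succ, Nat.choose_self, Nat.cast_one, one_mul] at key
  linarith

theorem main_eq : ∀ n : ℕ, (numPreorders n : ℝ) = fA n := by
  intro n
  induction n using Nat.strong_induction_on with
  | _ n ih =>
    match n with
    | 0 =>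
      rw [numPreorders_zero, fA_zero, Nat.cast_one]
    | (m + 1) =>
      rw [numPreorders_rec (m + 1) (by omega), fA_rec (m + 1) (by omega)]
      push_cast
      apply Finset.sum_congr rfl
      intro i hi
      rw [ih i (Finset.mem_range.mp hi)]


/-- `P(n) = Σ_{k=0}^∞ kⁿ/2^{k+1}` for `n ≥ 1`. -/
theorem numPreorders_eq_tsum (n : ℕ) (hn : 1 ≤ n) :
    (numPreorders n : ℝ) = ∑' k : ℕ, (k : ℝ) ^ n / 2 ^ (k + 1) := main_eq n
end

section
/- For every n ≥ 1, S₁₁(n) = Σ_{k=0}^∞ 2^{-(k+1)} · Σ_{j=0}^{⌊n/2⌋} C(C(k,2), j) · C(k, n − 2j). -/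
open scoped BigOperators

section Aux
open Finset
open scoped Classical

noncomputable local instance (priority := 100) autoFin (α : Type*) [Finite α] : Fintype α :=
  Fintype.ofFinite α

lemma numOnes_eq_card {k l : ℕ} (M : Matrix (Fin k) (Fin l) Bool) :
    numOnes M = Fintype.card {p : Fin k × Fin l // M p.1 p.2 = true} := by
  rw [numOnes, Fintype.card_subtype]

/-- the set of nonzero rows -/
noncomputable def rowSupp {k l : ℕ} (M : Matrix (Fin k) (Fin l) Bool) : Finset (Fin k) :=
  univ.filter fun i => ∃ j, M i j = true

lemma card_rowSupp_le {k l : ℕ} (M : Matrix (Fin k) (Fin l) Bool) :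
    (rowSupp M).card ≤ numOnes M := by
  classical
  have : ∀ i ∈ rowSupp M, ∃ j, M i j = true := by
    intro i hi; simpa [rowSupp] using hi
  choose f hf using this
  have : (rowSupp M).card = ((rowSupp M).attach.image
      fun i => ((i.1, f i.1 i.2) : Fin k × Fin l)).card := by
    rw [Finset.card_image_of_injective, Finset.card_attach]
    intro a b hab
    exact Subtype.ext (congrArg Prod.fst hab)
  rw [this]
  apply Finset.card_le_card
  intro p hp
  simp only [Finset.mem_image, Finset.mem_attach, true_and, Subtype.exists] at hp
  obtain ⟨i, hi, rfl⟩ := hp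
  simp [numOnes, hf i hi]

lemma incidence_rows_le {k l n : ℕ} (M : Matrix (Fin k) (Fin l) Bool)
    (h : ∀ i, ∃ j, M i j = true) (hn : numOnes M = n) : k ≤ n := by
  have : rowSupp M = univ := by
    apply Finset.eq_univ_of_forall; intro i; simp [rowSupp, h i]
  have h2 := card_rowSupp_le M
  rw [this, hn] at h2
  simpa using h2

end Aux

lemma nat_card_sigma {ι : Type*} [Fintype ι] (f : ι → Type*) [∀ i, Finite (f i)] :
    Nat.card (Σ i, f i) = ∑ i, Nat.card (f i) := by
  letI : ∀ i, Fintype (f i) := fun i => Fintype.ofFinite _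
  simp only [Nat.card_eq_fintype_card, Fintype.card_sigma]

lemma muSym_eq_zero {i n : ℕ} (h : n < i) : muSym i n = 0 := by
  have : IsEmpty {M : Matrix (Fin i) (Fin i) Bool //
      (∀ a b, M a b = M b a) ∧ IsIncidence M ∧ numOnes M = n} := by
    constructor
    rintro ⟨M, _, hI, hN⟩
    exact absurd (incidence_rows_le M hI.1 hN) (by omega)
  rw [muSym, Nat.card_of_isEmpty]

lemma S11_eq_sum (n : ℕ) : S11 n = ∑ i ∈ Finset.range (n + 1), muSym i n := by
  classical
  have e : {A : Σ k : ℕ, Matrix (Fin k) (Fin k) Bool //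
      (∀ i j, A.2 i j = A.2 j i) ∧ IsIncidence A.2 ∧ numOnes A.2 = n} ≃
      Σ i : Fin (n+1), {M : Matrix (Fin (i : ℕ)) (Fin (i : ℕ)) Bool //
        (∀ a b, M a b = M b a) ∧ IsIncidence M ∧ numOnes M = n} := by
    refine ⟨fun A => ⟨⟨A.1.1, ?_⟩, ⟨A.1.2, A.2⟩⟩, fun x => ⟨⟨x.1, x.2.1⟩, x.2.2⟩,
      fun A => rfl, fun x => rfl⟩
    have := incidence_rows_le A.1.2 A.2.2.1.1 A.2.2.2
    omega
  rw [S11, Nat.card_congr e, nat_card_sigma]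
  rw [Fin.sum_univ_eq_sum_range (fun m => Nat.card {M : Matrix (Fin m) (Fin m) Bool //
        (∀ a b, M a b = M b a) ∧ IsIncidence M ∧ numOnes M = n})]
  rfl

section Restrict
open Finset

variable {k n : ℕ}

private def eIso (S : Finset (Fin k)) : Fin S.card ≃o {x // x ∈ S} := S.orderIsoOfFin rfl

def extMat (S : Finset (Fin k)) (N : Matrix (Fin S.card) (Fin S.card) Bool) :
    Matrix (Fin k) (Fin k) Bool :=
  fun i j => if hi : i ∈ S then if hj : j ∈ S then
      N ((eIso S).symm ⟨i, hi⟩) ((eIso S).symm ⟨j, hj⟩)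
    else false else false

def resMat (S : Finset (Fin k)) (M : Matrix (Fin k) (Fin k) Bool) :
    Matrix (Fin S.card) (Fin S.card) Bool :=
  fun a b => M (eIso S a) (eIso S b)

lemma extMat_apply_mem (S : Finset (Fin k)) (N : Matrix (Fin S.card) (Fin S.card) Bool)
    {i j : Fin k} (hi : i ∈ S) (hj : j ∈ S) :
    extMat S N i j = N ((eIso S).symm ⟨i, hi⟩) ((eIso S).symm ⟨j, hj⟩) := by
  simp [extMat, hi, hj]

lemma extMat_apply_e (S : Finset (Fin k)) (N : Matrix (Fin S.card) (Fin S.card) Bool)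
    (a b : Fin S.card) :
    extMat S N (eIso S a) (eIso S b) = N a b := by
  rw [extMat_apply_mem S N (eIso S a).2 (eIso S b).2]
  exact congrArg₂ N ((eIso S).symm_apply_apply a) ((eIso S).symm_apply_apply b)

lemma mem_of_extMat_true {S : Finset (Fin k)} {N : Matrix (Fin S.card) (Fin S.card) Bool}
    {i j : Fin k} (h : extMat S N i j = true) : i ∈ S ∧ j ∈ S := by
  by_contra hc
  rw [not_and_or] at hc
  rcases hc with hc | hc
  · simp [extMat, hc] at h
  · by_cases hi : i ∈ S <;> simp [extMat, hi, hc] at h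

lemma numOnes_extMat (S : Finset (Fin k)) (N : Matrix (Fin S.card) (Fin S.card) Bool) :
    numOnes (extMat S N) = numOnes N := by
  rw [numOnes_eq_card, numOnes_eq_card]
  refine Fintype.card_congr (Equiv.symm ?_)
  refine ⟨fun q => ⟨(eIso S q.1.1, eIso S q.1.2), by
      rw [extMat_apply_e]; exact q.2⟩,
    fun p => ⟨((eIso S).symm ⟨p.1.1, (mem_of_extMat_true p.2).1⟩,
               (eIso S).symm ⟨p.1.2, (mem_of_extMat_true p.2).2⟩), by
      rw [← extMat_apply_mem S N (mem_of_extMat_true p.2).1 (mem_of_extMat_true p.2).2]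
      exact p.2⟩,
    fun q => ?_, fun p => ?_⟩
  · apply Subtype.ext
    apply Prod.ext <;> simp
  · apply Subtype.ext
    apply Prod.ext <;> simp

lemma rowSupp_extMat (S : Finset (Fin k)) (N : Matrix (Fin S.card) (Fin S.card) Bool)
    (hN : ∀ a, ∃ b, N a b = true) : rowSupp (extMat S N) = S := by
  ext i
  simp only [rowSupp, mem_filter, mem_univ, true_and]
  constructor
  · rintro ⟨j, hj⟩; exact (mem_of_extMat_true hj).1
  · intro hi
    obtain ⟨b, hb⟩ := hN ((eIso S).symm ⟨i, hi⟩)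
    refine ⟨eIso S b, ?_⟩
    rw [extMat_apply_mem S N hi (eIso S b).2]
    simpa using hb

lemma extMat_resMat (S : Finset (Fin k)) (M : Matrix (Fin k) (Fin k) Bool)
    (hsym : ∀ a b, M a b = M b a) (hsupp : rowSupp M = S) :
    extMat S (resMat S M) = M := by
  have hfalse : ∀ i j, i ∉ S → M i j = false := by
    intro i j hi
    by_contra h
    have : i ∈ rowSupp M := by
      simp only [rowSupp, mem_filter, mem_univ, true_and]
      exact ⟨j, by simpa using h⟩
    rw [hsupp] at this; exact hi this
  funext i j
  by_cases hi : i ∈ S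
  · by_cases hj : j ∈ S
    · rw [extMat_apply_mem S _ hi hj]
      simp [resMat]
    · rw [hsym]
      simp [extMat, hi, hj, hfalse j i hj]
  · simp [extMat, hi, hfalse i j hi]

lemma resMat_extMat (S : Finset (Fin k)) (N : Matrix (Fin S.card) (Fin S.card) Bool) :
    resMat S (extMat S N) = N := by
  funext a b
  rw [resMat, extMat_apply_e]

def fiberEquiv (S : Finset (Fin k)) (n : ℕ) :
    {M : Matrix (Fin k) (Fin k) Bool //
      ((∀ a b, M a b = M b a) ∧ numOnes M = n) ∧ rowSupp M = S} ≃
    {N : Matrix (Fin S.card) (Fin S.card) Bool //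
      (∀ a b, N a b = N b a) ∧ IsIncidence N ∧ numOnes N = n} where
  toFun M := by
    have hrow : ∀ a, ∃ b, resMat S M.1 a b = true := by
      intro a
      have hmem : ((eIso S a : {x // x ∈ S}) : Fin k) ∈ rowSupp M.1 := by
        rw [M.2.2]; exact (eIso S a).2
      simp only [rowSupp, mem_filter, mem_univ, true_and] at hmem
      obtain ⟨j, hj⟩ := hmem
      have hjS : j ∈ S := by
        rw [← M.2.2]
        simp only [rowSupp, mem_filter, mem_univ, true_and]
        exact ⟨_, (M.2.1.1 _ _).symm.trans hj⟩
      refine ⟨(eIso S).symm ⟨j, hjS⟩, ?_⟩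
      simp only [resMat, OrderIso.apply_symm_apply]
      exact hj
    refine ⟨resMat S M.1, fun a b => M.2.1.1 _ _, ⟨hrow, ?_⟩, ?_⟩
    · intro b
      obtain ⟨a, ha⟩ := hrow b
      exact ⟨a, (M.2.1.1 _ _).symm.trans ha⟩
    · have := numOnes_extMat S (resMat S M.1)
      rw [extMat_resMat S M.1 M.2.1.1 M.2.2] at this
      rw [← this, M.2.1.2]
  invFun N := by
    refine ⟨extMat S N.1, ⟨fun a b => ?_, ?_⟩, ?_⟩
    · by_cases hi : a ∈ S <;> by_cases hj : b ∈ S <;>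
        simp [extMat, hi, hj, N.2.1 _ _]
    · rw [numOnes_extMat]; exact N.2.2.2
    · exact rowSupp_extMat S N.1 N.2.2.1.1
  left_inv M := Subtype.ext (extMat_resMat S M.1 M.2.1.1 M.2.2)
  right_inv N := Subtype.ext (resMat_extMat S N.1)

end Restrict

section SumDecomp
open Finset
open scoped Classical

lemma sSym_eq_sum (k n : ℕ) :
    sSym k n = ∑ i ∈ Finset.range (n + 1), k.choose i * muSym i n := by
  have e1 : {M : Matrix (Fin k) (Fin k) Bool // (∀ a b, M a b = M b a) ∧ numOnes M = n} ≃
      Σ S : Finset (Fin k), {M : Matrix (Fin k) (Fin k) Bool //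
        ((∀ a b, M a b = M b a) ∧ numOnes M = n) ∧ rowSupp M = S} :=
    (Equiv.sigmaFiberEquiv (fun M : {M : Matrix (Fin k) (Fin k) Bool //
        (∀ a b, M a b = M b a) ∧ numOnes M = n} => rowSupp M.1)).symm.trans
      (Equiv.sigmaCongrRight fun S => Equiv.subtypeSubtypeEquivSubtypeInter
        (fun M : Matrix (Fin k) (Fin k) Bool => (∀ a b, M a b = M b a) ∧ numOnes M = n)
        (fun M => rowSupp M = S))
  have h1 : sSym k n = ∑ S : Finset (Fin k), muSym S.card n := by
    rw [sSym, Nat.card_congr e1, nat_card_sigma]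
    refine Finset.sum_congr rfl fun S _ => ?_
    rw [Nat.card_congr (fiberEquiv S n)]; rfl
  rw [h1, ← Finset.sum_fiberwise_of_maps_to (g := Finset.card) (t := Finset.range (k+1))
      (fun S _ => Finset.mem_range.2 (Nat.lt_succ_of_le (by simpa using Finset.card_le_univ S)))]
  have h2 : ∀ j, (Finset.univ.filter fun S : Finset (Fin k) => S.card = j).card = k.choose j := by
    intro j
    rw [← Fintype.card_subtype, Fintype.card_finset_len, Fintype.card_fin]
  have h3 : ∀ j ∈ Finset.range (k+1),
      (∑ S ∈ Finset.univ.filter fun S : Finset (Fin k) => S.card = j, muSym S.card n)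
        = k.choose j * muSym j n := by
    intro j _
    rw [Finset.sum_congr rfl (fun S hS => by rw [(Finset.mem_filter.1 hS).2]),
      Finset.sum_const, h2, smul_eq_mul]
  rw [Finset.sum_congr rfl h3]
  have hz1 : ∀ i ∈ Finset.range (k+n+2), i ∉ Finset.range (k+1) →
      k.choose i * muSym i n = 0 := by
    intro i _ hi
    rw [Nat.choose_eq_zero_of_lt (by simpa using hi), Nat.zero_mul]
  have hz2 : ∀ i ∈ Finset.range (k+n+2), i ∉ Finset.range (n+1) →
      k.choose i * muSym i n = 0 := by
    intro i _ hi
    rw [muSym_eq_zero (by simpa using hi), Nat.mul_zero]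
  rw [Finset.sum_subset (Finset.range_subset_range.2 (by omega)) hz1,
    ← Finset.sum_subset (Finset.range_subset_range.2 (by omega)) hz2]

end SumDecomp

section Pairs
open Finset
open scoped Classical

variable {k n : ℕ}

def ltPairEquiv (k : ℕ) : {q : Fin k × Fin k // q.1 < q.2} ≃ Σ j : Fin k, Fin j.val where
  toFun q := ⟨q.1.2, ⟨q.1.1.val, q.2⟩⟩
  invFun p := ⟨(⟨p.2.val, lt_trans p.2.isLt p.1.isLt⟩, p.1), p.2.isLt⟩
  left_inv q := rfl
  right_inv p := rfl

lemma card_ltPairs (k : ℕ) :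
    Fintype.card {q : Fin k × Fin k // q.1 < q.2} = k.choose 2 := by
  rw [Fintype.card_congr (ltPairEquiv k), Fintype.card_sigma]
  simp only [Fintype.card_fin]
  rw [Fin.sum_univ_eq_sum_range (fun j => j), Finset.sum_range_id, Nat.choose_two_right]

def matE (M : Matrix (Fin k) (Fin k) Bool) : Finset {q : Fin k × Fin k // q.1 < q.2} :=
  univ.filter fun q => M q.1.1 q.1.2 = true

def matD (M : Matrix (Fin k) (Fin k) Bool) : Finset (Fin k) :=
  univ.filter fun i => M i i = true

def pairMat (E : Finset {q : Fin k × Fin k // q.1 < q.2}) (D : Finset (Fin k)) :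
    Matrix (Fin k) (Fin k) Bool :=
  fun i j => if h : i < j then decide (⟨(i, j), h⟩ ∈ E)
    else if h' : j < i then decide (⟨(j, i), h'⟩ ∈ E) else decide (i ∈ D)

lemma numOnes_decomp (M : Matrix (Fin k) (Fin k) Bool) (hsym : ∀ a b, M a b = M b a) :
    numOnes M = 2 * (matE M).card + (matD M).card := by
  have eE : Fintype.card {p : Fin k × Fin k // M p.1 p.2 = true ∧ p.1 < p.2}
      = (matE M).card := by
    rw [matE, ← Fintype.card_subtype]
    refine Fintype.card_congr ?_
    refine (Equiv.subtypeEquivRight fun p => and_comm).trans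
      ((Equiv.subtypeSubtypeEquivSubtypeInter
        (fun p : Fin k × Fin k => p.1 < p.2) (fun p => M p.1 p.2 = true)).symm)
  have eG : Fintype.card {p : Fin k × Fin k // M p.1 p.2 = true ∧ p.2 < p.1}
      = (matE M).card := by
    rw [← eE]
    refine Fintype.card_congr ⟨fun p => ⟨(p.1.2, p.1.1), ⟨(hsym _ _).symm.trans p.2.1, p.2.2⟩⟩,
      fun p => ⟨(p.1.2, p.1.1), ⟨(hsym _ _).symm.trans p.2.1, p.2.2⟩⟩,
      fun p => Subtype.ext rfl, fun p => Subtype.ext rfl⟩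
  have eD : Fintype.card {p : Fin k × Fin k // M p.1 p.2 = true ∧ p.1 = p.2}
      = (matD M).card := by
    rw [matD, ← Fintype.card_subtype]
    refine Fintype.card_congr ⟨fun p => ⟨p.1.1, by have := p.2.1; rw [p.2.2] at this ⊢; exact this⟩,
      fun i => ⟨(i.1, i.1), ⟨i.2, rfl⟩⟩, fun p => Subtype.ext (Prod.ext rfl p.2.2),
      fun i => rfl⟩
  have split1 : numOnes M =
      Fintype.card {p : Fin k × Fin k // M p.1 p.2 = true ∧ p.1 < p.2}
      + Fintype.card {p : Fin k × Fin k // M p.1 p.2 = true ∧ ¬ p.1 < p.2} := by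
    rw [numOnes_eq_card]
    rw [Fintype.card_subtype, Fintype.card_subtype, Fintype.card_subtype,
      ← Finset.filter_filter, ← Finset.filter_filter,
      Finset.card_filter_add_card_filter_not]
  have split2 : Fintype.card {p : Fin k × Fin k // M p.1 p.2 = true ∧ ¬ p.1 < p.2}
      = Fintype.card {p : Fin k × Fin k // M p.1 p.2 = true ∧ p.1 = p.2}
      + Fintype.card {p : Fin k × Fin k // M p.1 p.2 = true ∧ p.2 < p.1} := by
    rw [Fintype.card_subtype, Fintype.card_subtype, Fintype.card_subtype]
    have : ∀ p : Fin k × Fin k, (M p.1 p.2 = true ∧ ¬ p.1 < p.2) ↔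
        ((M p.1 p.2 = true ∧ p.1 = p.2) ∨ (M p.1 p.2 = true ∧ p.2 < p.1)) := by
      intro p
      constructor
      · rintro ⟨h1, h2⟩
        rcases lt_trichotomy p.1 p.2 with h | h | h
        · exact absurd h h2
        · exact Or.inl ⟨h1, h⟩
        · exact Or.inr ⟨h1, h⟩
      · rintro (⟨h1, h2⟩ | ⟨h1, h2⟩)
        · exact ⟨h1, by simp [h2]⟩
        · exact ⟨h1, by omega⟩
    rw [Finset.filter_congr (fun p _ => this p), Finset.filter_or, Finset.card_union_of_disjoint]
    rw [Finset.disjoint_left]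
    rintro p hp hp'
    simp only [mem_filter] at hp hp'
    have := hp.2.2
    have := hp'.2.2
    omega
  rw [split1, split2, eE, eG, eD]
  ring

lemma matE_pairMat (E : Finset {q : Fin k × Fin k // q.1 < q.2}) (D : Finset (Fin k)) :
    matE (pairMat E D) = E := by
  ext q
  simp only [matE, mem_filter, mem_univ, true_and, pairMat, q.2, dif_pos]
  simp [q.2]

lemma matD_pairMat (E : Finset {q : Fin k × Fin k // q.1 < q.2}) (D : Finset (Fin k)) :
    matD (pairMat E D) = D := by
  ext i
  simp [matD, pairMat]

lemma pairMat_symm (E : Finset {q : Fin k × Fin k // q.1 < q.2}) (D : Finset (Fin k))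
    (a b : Fin k) : pairMat E D a b = pairMat E D b a := by
  rcases lt_trichotomy a b with h | h | h
  · simp [pairMat, h, not_lt_of_gt h, lt_asymm h]
  · simp [h]
  · simp [pairMat, h, not_lt_of_gt h, lt_asymm h]

def symPairEquiv (k n : ℕ) :
    {M : Matrix (Fin k) (Fin k) Bool // (∀ a b, M a b = M b a) ∧ numOnes M = n} ≃
    {p : Finset {q : Fin k × Fin k // q.1 < q.2} × Finset (Fin k) //
      2 * p.1.card + p.2.card = n} where
  toFun M := ⟨(matE M.1, matD M.1), by rw [← numOnes_decomp M.1 M.2.1]; exact M.2.2⟩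
  invFun p := ⟨pairMat p.1.1 p.1.2, pairMat_symm _ _, by
    rw [numOnes_decomp _ (pairMat_symm _ _), matE_pairMat, matD_pairMat]; exact p.2⟩
  left_inv M := by
    apply Subtype.ext
    funext i j
    rcases lt_trichotomy i j with h | h | h
    · simp only [pairMat, h, dif_pos, matE, mem_filter, mem_univ, true_and]
      by_cases hb : M.1 i j = true <;> simp [hb]
    · subst h
      simp only [pairMat, lt_irrefl, dif_neg, not_false_iff, matD, mem_filter, mem_univ, true_and]
      by_cases hb : M.1 i i = true <;> simp [hb]
    · simp only [pairMat, not_lt_of_gt h, dif_neg, not_false_iff, h, dif_pos,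
        matE, mem_filter, mem_univ, true_and]
      rw [M.2.1 j i]
      by_cases hb : M.1 i j = true <;> simp [hb]
  right_inv p := by
    apply Subtype.ext
    exact Prod.ext (matE_pairMat _ _) (matD_pairMat _ _)

lemma sSym_eq_pairs (k n : ℕ) :
    sSym k n = ∑ j ∈ Finset.range (n / 2 + 1),
      (k.choose 2).choose j * k.choose (n - 2 * j) := by
  rw [sSym, Nat.card_congr (symPairEquiv k n), Nat.card_eq_fintype_card, Fintype.card_subtype]
  have hset : (univ.filter fun p : Finset {q : Fin k × Fin k // q.1 < q.2} × Finset (Fin k) =>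
      2 * p.1.card + p.2.card = n) =
      (Finset.range (n / 2 + 1)).biUnion fun j =>
        (univ.filter fun E : Finset {q : Fin k × Fin k // q.1 < q.2} => E.card = j) ×ˢ
        (univ.filter fun D : Finset (Fin k) => D.card = n - 2 * j) := by
    ext p
    simp only [mem_filter, mem_univ, true_and, Finset.mem_biUnion, Finset.mem_range,
      Finset.mem_product]
    constructor
    · intro h
      exact ⟨p.1.card, by omega, rfl, by omega⟩
    · rintro ⟨j, hj, h1, h2⟩
      omega
  rw [hset, Finset.card_biUnion]
  · refine Finset.sum_congr rfl fun j _ => ?_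
    rw [Finset.card_product]
    congr 1
    · rw [← Fintype.card_subtype, Fintype.card_finset_len, card_ltPairs]
    · rw [← Fintype.card_subtype, Fintype.card_finset_len, Fintype.card_fin]
  · intro j1 _ j2 _ hne
    rw [Function.onFun, Finset.disjoint_left]
    rintro p hp hp'
    simp only [Finset.mem_product, mem_filter, mem_univ, true_and] at hp hp'
    exact hne (hp.1 ▸ hp'.1 ▸ rfl)

end Pairs

lemma hasSum_choose_half (i : ℕ) :
    HasSum (fun m : ℕ => (m.choose i : ℝ) * (1 / 2) ^ (m + 1)) 1 := by
  have h2 : ‖(1/2 : ℝ)‖ < 1 := by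
    rw [Real.norm_eq_abs, abs_of_pos] <;> norm_num
  have h := hasSum_choose_mul_geometric_of_norm_lt_one i h2
  have h' := h.mul_right ((1/2 : ℝ) ^ (i + 1))
  have hv : (1 / (1 - 1/2 : ℝ) ^ (i+1)) * (1/2) ^ (i+1) = 1 := by
    rw [show (1 - (1:ℝ)/2) = 1/2 by norm_num, one_div,
      inv_mul_cancel₀ (pow_ne_zero _ (by norm_num))]
  rw [hv] at h'
  have hfun : (fun m : ℕ => ((m + i).choose i : ℝ) * (1/2) ^ m * (1/2) ^ (i+1))
      = fun m : ℕ => (((m + i).choose i : ℝ)) * (1/2) ^ (m + i + 1) := by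
    funext m
    rw [mul_assoc, ← pow_add, show m + (i + 1) = m + i + 1 from by omega]
  rw [hfun] at h'
  have := (hasSum_nat_add_iff (f := fun m : ℕ => (m.choose i : ℝ) * (1 / 2) ^ (m + 1)) i).1 h'
  have hz : ∑ m ∈ Finset.range i, (m.choose i : ℝ) * (1 / 2) ^ (m + 1) = 0 :=
    Finset.sum_eq_zero fun m hm => by
      rw [Nat.choose_eq_zero_of_lt (Finset.mem_range.1 hm), Nat.cast_zero, zero_mul]
  rw [hz, add_zero] at this
  exact this

/-- `S₁₁(n) = Σ_{k≥0} 2^{-(k+1)} Σ_{j=0}^{⌊n/2⌋} C(C(k,2),j) C(k,n-2j)`. -/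
theorem S11_eq_tsum (n : ℕ) (hn : 1 ≤ n) :
    (S11 n : ℝ) =
      ∑' k : ℕ, (1 / 2 ^ (k + 1)) *
        ∑ j ∈ Finset.range (n / 2 + 1),
          ((k.choose 2).choose j : ℝ) * (k.choose (n - 2 * j) : ℝ) := by
  have hk : ∀ k : ℕ,
      (∑ i ∈ Finset.range (n+1), (muSym i n : ℝ) * ((k.choose i : ℝ) * (1/2) ^ (k+1)))
      = (1 / 2 ^ (k + 1)) * ∑ j ∈ Finset.range (n/2+1),
          ((k.choose 2).choose j : ℝ) * (k.choose (n - 2*j) : ℝ) := by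
    intro k
    have h1 : ((sSym k n : ℕ) : ℝ)
        = ∑ i ∈ Finset.range (n+1), (k.choose i : ℝ) * (muSym i n : ℝ) := by
      rw [sSym_eq_sum]; push_cast; rfl
    have h2 : ((sSym k n : ℕ) : ℝ) = ∑ j ∈ Finset.range (n/2+1),
        ((k.choose 2).choose j : ℝ) * (k.choose (n - 2*j) : ℝ) := by
      rw [sSym_eq_pairs]; push_cast; rfl
    calc ∑ i ∈ Finset.range (n+1), (muSym i n : ℝ) * ((k.choose i : ℝ) * (1/2) ^ (k+1))
        = (∑ i ∈ Finset.range (n+1), (k.choose i : ℝ) * (muSym i n : ℝ)) * (1/2) ^ (k+1) := by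
          rw [Finset.sum_mul]; exact Finset.sum_congr rfl fun i _ => by ring
      _ = (∑ j ∈ Finset.range (n/2+1),
            ((k.choose 2).choose j : ℝ) * (k.choose (n - 2*j) : ℝ)) * (1/2) ^ (k+1) := by
          rw [← h1, h2]
      _ = (1 / 2 ^ (k + 1)) * ∑ j ∈ Finset.range (n/2+1),
            ((k.choose 2).choose j : ℝ) * (k.choose (n - 2*j) : ℝ) := by
          rw [one_div_pow, mul_comm, one_div]
  calc (S11 n : ℝ) = ∑ i ∈ Finset.range (n+1), (muSym i n : ℝ) := by
        rw [S11_eq_sum]; push_cast; rfl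
    _ = ∑ i ∈ Finset.range (n+1), ∑' k : ℕ,
          (muSym i n : ℝ) * ((k.choose i : ℝ) * (1/2) ^ (k+1)) := by
        refine Finset.sum_congr rfl fun i _ => ?_
        rw [((hasSum_choose_half i).mul_left _).tsum_eq, mul_one]
    _ = ∑' k : ℕ, ∑ i ∈ Finset.range (n+1),
          (muSym i n : ℝ) * ((k.choose i : ℝ) * (1/2) ^ (k+1)) := by
        exact (Summable.tsum_finsetSum fun i _ => ((hasSum_choose_half i).mul_left _).summable).symm
    _ = _ := tsum_congr hk
end
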